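/- arXiv:2006.00463 — 2 statements merged into one kernel-verified Lean document; each statement's English description precedes it below -/
import Mathlib

section
/- Suppose b, σ, σ⁰ : [0,T] × ℝ^d × 𝒫₂(ℝ^d) → ℝ^d (resp. matrix-valued) satisfy: (i) the one-sided polynomial monotonicity condition 2(x−x̄)·(b_t(x,μ)−b_t(x̄,μ̄)) + (p₁−1)|σ_t(x,μ)−σ_t(x̄,μ̄)|² + (p₁−1)|σ⁰_t(x,μ)−σ⁰_t(x̄,μ̄)|² ≤ L(|x−x̄|² + W₂²(μ,μ̄)) for some p₁ > 2; and (ii) the drift bound |b_t(x,μ)−b_t(x̄,μ̄)| ≤ L((1+|x|+|x̄|)^{ρ/2}|x−x̄| + W₂(μ,μ̄)). Then there exists a constant K = K(L) > 0 such that |σ_t(x,μ)−σ_t(x̄,μ̄)| + |σ⁰_t(x,μ)−σ⁰_t(x̄,μ̄)| ≤ K((1+|x|+|x̄|)^{ρ/4}|x−x̄| + W₂(μ,μ̄)) for all t ∈ [0,T], x,x̄ ∈ ℝ^d and μ,μ̄ ∈ 𝒫₂(ℝ^d). -/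
open MeasureTheory Set
open scoped ENNReal BigOperators RealInnerProductSpace

/-- The squared 2-Wasserstein distance, defined as the infimum over couplings of the
integrated squared Euclidean distance. -/
noncomputable def W2sq {d : ℕ}
    (μ ν : Measure (EuclideanSpace ℝ (Fin d))) : ℝ :=
  sInf {r : ℝ |
    ∃ π : Measure (EuclideanSpace ℝ (Fin d) × EuclideanSpace ℝ (Fin d)),
      IsProbabilityMeasure π ∧ π.map Prod.fst = μ ∧ π.map Prod.snd = ν ∧
      r = ∫ p, ‖p.1 - p.2‖ ^ 2 ∂π}

/-- The 2-Wasserstein distance. -/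
noncomputable def W2 {d : ℕ}
    (μ ν : Measure (EuclideanSpace ℝ (Fin d))) : ℝ :=
  Real.sqrt (W2sq μ ν)

/-- `μ ∈ 𝒫₂(ℝ^d)`: a probability measure with finite second moment. -/
def MemP2 {d : ℕ} (μ : Measure (EuclideanSpace ℝ (Fin d))) : Prop :=
  IsProbabilityMeasure μ ∧ Integrable (fun x => ‖x‖ ^ 2) μ


lemma W2sq_nonneg {d : ℕ} (μ ν : Measure (EuclideanSpace ℝ (Fin d))) :
    0 ≤ W2sq μ ν := by
  apply Real.sInf_nonneg
  rintro r ⟨π, _, _, _, rfl⟩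
  exact integral_nonneg fun p => by positivity

lemma W2_sq {d : ℕ} (μ ν : Measure (EuclideanSpace ℝ (Fin d))) :
    W2 μ ν ^ 2 = W2sq μ ν :=
  Real.sq_sqrt (W2sq_nonneg μ ν)

set_option maxHeartbeats 1600000

/-- If `b, σ, σ⁰` satisfy the one-sided polynomial monotonicity condition with exponent
`p₁ > 2` and `b` is polynomially Lipschitz with exponent `ρ/2`, then `σ` and `σ⁰` are
polynomially Lipschitz with exponent `ρ/4`. -/
theorem diffusion_polynomial_lipschitz {d m m₀ : ℕ} (T L ρ p₁ : ℝ)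
    (hT : 0 < T) (hL : 0 < L) (hρ : 0 < ρ) (hp₁ : 2 < p₁)
    (b : ℝ → EuclideanSpace ℝ (Fin d) → Measure (EuclideanSpace ℝ (Fin d)) →
      EuclideanSpace ℝ (Fin d))
    (σ : ℝ → EuclideanSpace ℝ (Fin d) → Measure (EuclideanSpace ℝ (Fin d)) →
      EuclideanSpace ℝ (Fin d × Fin m))
    (σ₀ : ℝ → EuclideanSpace ℝ (Fin d) → Measure (EuclideanSpace ℝ (Fin d)) →
      EuclideanSpace ℝ (Fin d × Fin m₀))
    (hmono : ∀ t ∈ Icc (0:ℝ) T, ∀ (x x' : EuclideanSpace ℝ (Fin d))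
      (μ μ' : Measure (EuclideanSpace ℝ (Fin d))), MemP2 μ → MemP2 μ' →
      2 * (inner ℝ (x - x') (b t x μ - b t x' μ') : ℝ)
          + (p₁ - 1) * ‖σ t x μ - σ t x' μ'‖ ^ 2
          + (p₁ - 1) * ‖σ₀ t x μ - σ₀ t x' μ'‖ ^ 2
        ≤ L * (‖x - x'‖ ^ 2 + W2sq μ μ'))
    (hb : ∀ t ∈ Icc (0:ℝ) T, ∀ (x x' : EuclideanSpace ℝ (Fin d))
      (μ μ' : Measure (EuclideanSpace ℝ (Fin d))), MemP2 μ → MemP2 μ' →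
      ‖b t x μ - b t x' μ'‖
        ≤ L * ((1 + ‖x‖ + ‖x'‖) ^ (ρ/2) * ‖x - x'‖ + W2 μ μ')) :
    ∃ K > (0 : ℝ), ∀ t ∈ Icc (0:ℝ) T, ∀ (x x' : EuclideanSpace ℝ (Fin d))
      (μ μ' : Measure (EuclideanSpace ℝ (Fin d))), MemP2 μ → MemP2 μ' →
      ‖σ t x μ - σ t x' μ'‖ + ‖σ₀ t x μ - σ₀ t x' μ'‖
        ≤ K * ((1 + ‖x‖ + ‖x'‖) ^ (ρ/4) * ‖x - x'‖ + W2 μ μ') := by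

  have hden : (0:ℝ) < p₁ - 1 := by linarith
  refine ⟨Real.sqrt (8 * L / (p₁ - 1)), Real.sqrt_pos.mpr (by positivity), ?_⟩
  intro t ht x x' μ μ' hμ hμ'
  set K := Real.sqrt (8 * L / (p₁ - 1)) with hKdef
  have hK2 : K ^ 2 = 8 * L / (p₁ - 1) := Real.sq_sqrt (by positivity)
  have hKnn : 0 ≤ K := Real.sqrt_nonneg _
  set a := ‖x - x'‖ with ha_def
  set w := W2 μ μ' with hw_def
  set s := ‖σ t x μ - σ t x' μ'‖ with hs_def
  set s₀ := ‖σ₀ t x μ - σ₀ t x' μ'‖ with hs0_def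
  set Q := (1 + ‖x‖ + ‖x'‖) ^ (ρ/4) with hQ_def
  have hbase : (0:ℝ) < 1 + ‖x‖ + ‖x'‖ := by positivity
  have hbase1 : (1:ℝ) ≤ 1 + ‖x‖ + ‖x'‖ := by
    have := norm_nonneg x; have := norm_nonneg x'; linarith
  have hQ1 : (1:ℝ) ≤ Q := by
    have := Real.rpow_le_rpow_of_exponent_le hbase1 (by positivity : (0:ℝ) ≤ ρ/4)
    simpa [Real.rpow_zero] using this
  have hQ2 : Q ^ 2 = (1 + ‖x‖ + ‖x'‖) ^ (ρ/2) := by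
    rw [hQ_def, ← Real.rpow_natCast ((1 + ‖x‖ + ‖x'‖) ^ (ρ/4)) 2,
      ← Real.rpow_mul hbase.le]
    norm_num
    congr 1
    ring
  have ha : 0 ≤ a := norm_nonneg _
  have hw : 0 ≤ w := Real.sqrt_nonneg _
  have hs : 0 ≤ s := norm_nonneg _
  have hs0 : 0 ≤ s₀ := norm_nonneg _
  have hwsq : w ^ 2 = W2sq μ μ' := W2_sq μ μ'
  have hM := hmono t ht x x' μ μ' hμ hμ'
  rw [← hwsq] at hM
  have hB := hb t ht x x' μ μ' hμ hμ'
  rw [← hQ2] at hB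
  have hCS : |(inner ℝ (x - x') (b t x μ - b t x' μ') : ℝ)|
      ≤ a * ‖b t x μ - b t x' μ'‖ := abs_real_inner_le_norm _ _
  have h3 : -(a * ‖b t x μ - b t x' μ'‖)
      ≤ (inner ℝ (x - x') (b t x μ - b t x' μ') : ℝ) :=
    (neg_le_neg hCS).trans (neg_abs_le _)
  have haB : a * ‖b t x μ - b t x' μ'‖ ≤ a * (L * (Q ^ 2 * a + w)) :=
    mul_le_mul_of_nonneg_left hB ha
  have h5 : (p₁ - 1) * (s ^ 2 + s₀ ^ 2)
      ≤ L * (a ^ 2 + w ^ 2) + 2 * (a * (L * (Q ^ 2 * a + w))) := by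
    nlinarith [hM, h3, haB]
  have hE : 0 ≤ (p₁ - 1) * (s - s₀) ^ 2 := mul_nonneg hden.le (sq_nonneg _)
  have hQsq : 1 ≤ Q ^ 2 := by nlinarith [sq_nonneg (Q - 1)]
  have hA : 0 ≤ L * a ^ 2 * (Q ^ 2 - 1) :=
    mul_nonneg (mul_nonneg hL.le (sq_nonneg a)) (by linarith)
  have hF : 0 ≤ L * (Q * a) ^ 2 := by positivity
  have hB2 : 0 ≤ L * (a * w) * (Q - 1) :=
    mul_nonneg (mul_nonneg hL.le (mul_nonneg ha hw)) (by linarith)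
  have hC : 0 ≤ L * (a * w) := by positivity
  have hD : 0 ≤ L * w ^ 2 := by positivity
  have key : (p₁ - 1) * (s + s₀) ^ 2 ≤ 8 * L * (Q * a + w) ^ 2 := by
    nlinarith [h5, hE, hA, hF, hB2, hC, hD]
  have hRnn : 0 ≤ Q * a + w := by positivity
  have h4 : (s + s₀) ^ 2 ≤ (K * (Q * a + w)) ^ 2 := by
    rw [mul_pow, hK2, div_mul_eq_mul_div, le_div_iff₀ hden]
    nlinarith [key, hE, hA, hF, hB2, hC, hD]
  calc s + s₀ = Real.sqrt ((s + s₀) ^ 2) := (Real.sqrt_sq (add_nonneg hs hs0)).symm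
    _ ≤ Real.sqrt ((K * (Q * a + w)) ^ 2) := Real.sqrt_le_sqrt h4
    _ = K * (Q * a + w) := Real.sqrt_sq (mul_nonneg hKnn hRnn)
end

section
/- Let f : ℝ^d × 𝒫₂(ℝ^d) → ℝ be such that its gradient in the state variable ∂_x f and its Lions measure derivative ∂_μ f satisfy, for constants L > 0 and χ, ξ ≥ 0: |∂_x f(x,μ) − ∂_x f(x̄,μ̄)| ≤ L((1+|x|+|x̄|)^χ |x−x̄| + W₂(μ,μ̄)) and |∂_μ f(x,μ,y) − ∂_μ f(x̄,μ̄,ȳ)| ≤ L((1+|x|+|x̄|)^{ξ+1}|x−x̄| + W₂(μ,μ̄) + |y−ȳ|). Then for all N-tuples (x¹,…,x^N) and (x̄¹,…,x̄^N) in ℝ^d and every i ∈ {1,…,N}, |f(x^i, (1/N)∑_j δ_{x^j}) − f(x̄^i, (1/N)∑_j δ_{x̄^j}) − ∂_x f(x̄^i, (1/N)∑_j δ_{x̄^j})·(x^i − x̄^i) − (1/N)∑_{j=1}^N ∂_μ f(x̄^i, (1/N)∑_j δ_{x̄^j}, x̄^j)·(x^j − x̄^j)| ≤ K(1+|x^i|+|x̄^i|)^χ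 |x^i − x̄^i|² + K(1/N)∑_{j=1}^N |x^j − x̄^j|², where the constant K > 0 does not depend on N. -/
open MeasureTheory Set
open scoped ENNReal BigOperators RealInnerProductSpace

/-- The empirical measure `(1/N) ∑_{j} δ_{x_j}`. -/
noncomputable def emp {d N : ℕ} (x : Fin N → EuclideanSpace ℝ (Fin d)) :
    Measure (EuclideanSpace ℝ (Fin d)) :=
  (N : ℝ≥0∞)⁻¹ • ∑ j, Measure.dirac (x j)

section infra

lemma map_finset_sum_meas {α β ι : Type*} [MeasurableSpace α] [MeasurableSpace β]
    (s : Finset ι) (μ : ι → Measure α) {g : α → β} (hg : Measurable g) :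
    (∑ i ∈ s, μ i).map g = ∑ i ∈ s, (μ i).map g := by
  classical
  induction s using Finset.induction_on with
  | empty => simp
  | insert _ _ h ih => rw [Finset.sum_insert h, Finset.sum_insert h, Measure.map_add _ _ hg, ih]

lemma integrable_dirac' {α : Type*} [MeasurableSpace α] {g : α → ℝ}
    (hg : StronglyMeasurable g) (a : α) : Integrable g (Measure.dirac a) := by
  refine ⟨hg.aestronglyMeasurable, ?_⟩
  rw [HasFiniteIntegral, lintegral_dirac' a]
  · exact ENNReal.coe_lt_top
  · exact hg.measurable.nnnorm.coe_nnreal_ennreal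

lemma isProb_scaled_sum {α : Type*} [MeasurableSpace α] {N : ℕ} (hN : 0 < N)
    (μ : Fin N → Measure α) (hμ : ∀ j, IsProbabilityMeasure (μ j)) :
    IsProbabilityMeasure ((N : ℝ≥0∞)⁻¹ • ∑ j, μ j) := by
  constructor
  simp only [Measure.smul_apply, Measure.coe_finset_sum, Finset.sum_apply, smul_eq_mul,
    measure_univ, Finset.sum_const, Finset.card_univ, Fintype.card_fin, nsmul_eq_mul, mul_one]
  exact ENNReal.inv_mul_cancel (by exact_mod_cast hN.ne') (ENNReal.natCast_ne_top N)

lemma integral_scaled_dirac {α : Type*} [MeasurableSpace α]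
    {N : ℕ} (p : Fin N → α) (g : α → ℝ) (hg : StronglyMeasurable g) :
    ∫ a, g a ∂((N : ℝ≥0∞)⁻¹ • ∑ j, Measure.dirac (p j))
      = (N : ℝ)⁻¹ * ∑ j, g (p j) := by
  rw [integral_smul_measure,
    integral_finset_sum_measure (fun j _ => integrable_dirac' hg (p j))]
  simp only [integral_dirac' _ _ hg, ENNReal.toReal_inv, ENNReal.toReal_natCast, smul_eq_mul]

lemma memP2_emp {d N : ℕ} (hN : 0 < N) (x : Fin N → EuclideanSpace ℝ (Fin d)) :
    MemP2 (emp x) := by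
  refine ⟨isProb_scaled_sum hN _ (fun j => Measure.dirac.isProbabilityMeasure), ?_⟩
  unfold emp
  refine Integrable.smul_measure ?_ (ENNReal.inv_ne_top.2 (by exact_mod_cast hN.ne'))
  exact integrable_finset_sum_measure.2 fun j _ =>
    integrable_dirac' (continuous_norm.pow 2).stronglyMeasurable (x j)

end infra


lemma W2_emp_le {d N : ℕ} (hN : 0 < N) (x y : Fin N → EuclideanSpace ℝ (Fin d)) :
    W2 (emp x) (emp y) ≤ Real.sqrt ((N : ℝ)⁻¹ * ∑ j, ‖x j - y j‖ ^ 2) := by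
  apply Real.sqrt_le_sqrt
  apply csInf_le
  · refine ⟨0, fun r hr => ?_⟩
    obtain ⟨π, hπ, -, -, hr⟩ := hr
    rw [hr]
    exact integral_nonneg fun p => by positivity
  · refine ⟨(N : ℝ≥0∞)⁻¹ • ∑ j, Measure.dirac (x j, y j),
      isProb_scaled_sum hN _ (fun j => Measure.dirac.isProbabilityMeasure), ?_, ?_, ?_⟩
    · rw [Measure.map_smul, map_finset_sum_meas _ _ measurable_fst]
      simp only [Measure.map_dirac' measurable_fst]
      rfl
    · rw [Measure.map_smul, map_finset_sum_meas _ _ measurable_snd]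
      simp only [Measure.map_dirac' measurable_snd]
      rfl
    · rw [integral_scaled_dirac _ (fun p : EuclideanSpace ℝ (Fin d) × EuclideanSpace ℝ (Fin d) =>
        ‖p.1 - p.2‖ ^ 2) (((continuous_fst.sub continuous_snd).norm.pow
        2).stronglyMeasurable)]

lemma taylor_aux {φ ψ : ℝ → ℝ} {c B : ℝ}
    (hd : ∀ t ∈ Icc (0:ℝ) 1, HasDerivAt φ (ψ t) t)
    (hb : ∀ t ∈ Icc (0:ℝ) 1, |ψ t - c| ≤ B) :
    |φ 1 - φ 0 - c| ≤ B := by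
  have h := (convex_Icc (0:ℝ) 1).norm_image_sub_le_of_norm_hasDerivWithin_le
    (f := fun t => φ t - t * c) (f' := fun t => ψ t - c)
    (fun t ht => by
      have h := ((hd t ht).sub ((hasDerivAt_id' t).mul_const c)).hasDerivWithinAt (s := Icc 0 1)
      rw [one_mul] at h; exact h)
    (fun t ht => by simpa using hb t ht)
    (left_mem_Icc.2 zero_le_one) (right_mem_Icc.2 zero_le_one)
  simp only [Real.norm_eq_abs] at h
  calc |φ 1 - φ 0 - c| = |(φ 1 - 1 * c) - (φ 0 - 0 * c)| := by ring_nf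
    _ ≤ B * |1 - 0| := h
    _ = B := by norm_num

lemma rep_sum {N m : ℕ} {F : Type*} [AddCommMonoid F] (g : Fin N → F) :
    ∑ J : Fin (N * m), g (finProdFinEquiv.symm J).1 = m • ∑ j, g j := by
  rw [← Equiv.sum_comp (finProdFinEquiv : Fin N × Fin m ≃ Fin (N * m))
    (fun J => g (finProdFinEquiv.symm J).1)]
  simp only [Equiv.symm_apply_apply]
  rw [Fintype.sum_prod_type]
  simp [Finset.sum_const, Finset.smul_sum]


set_option maxHeartbeats 2000000 in
lemma key_aux {d : ℕ} {L χ ξ : ℝ} (hL : 0 < L) (hχ : 0 ≤ χ) (hξ : 0 ≤ ξ)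
    (f : EuclideanSpace ℝ (Fin d) → Measure (EuclideanSpace ℝ (Fin d)) → ℝ)
    (Dx : EuclideanSpace ℝ (Fin d) → Measure (EuclideanSpace ℝ (Fin d)) →
      EuclideanSpace ℝ (Fin d))
    (Dμ : EuclideanSpace ℝ (Fin d) → Measure (EuclideanSpace ℝ (Fin d)) →
      EuclideanSpace ℝ (Fin d) → EuclideanSpace ℝ (Fin d))
    (hDx : ∀ (x x' : EuclideanSpace ℝ (Fin d))
      (μ μ' : Measure (EuclideanSpace ℝ (Fin d))), MemP2 μ → MemP2 μ' →
      ‖Dx x μ - Dx x' μ'‖ ≤ L * ((1 + ‖x‖ + ‖x'‖) ^ χ * ‖x - x'‖ + W2 μ μ'))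
    (hDμ : ∀ (x x' y y' : EuclideanSpace ℝ (Fin d))
      (μ μ' : Measure (EuclideanSpace ℝ (Fin d))), MemP2 μ → MemP2 μ' →
      ‖Dμ x μ y - Dμ x' μ' y'‖
        ≤ L * ((1 + ‖x‖ + ‖x'‖) ^ (ξ + 1) * ‖x - x'‖ + W2 μ μ' + ‖y - y'‖))
    {N M : ℕ} (hN : 0 < N) (hM : 0 < M)
    (x x' : Fin N → EuclideanSpace ℝ (Fin d)) (i : Fin N)
    (q : Fin M → Fin N) (I : Fin M) (hqI : q I = i)
    (hrep : ∀ g : Fin N → ℝ, (M:ℝ)⁻¹ * ∑ J, g (q J) = (N:ℝ)⁻¹ * ∑ j, g j)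
    (hempq : ∀ y : Fin N → EuclideanSpace ℝ (Fin d), emp (fun J => y (q J)) = emp y)
    (hLM : ∀ y : Fin M → EuclideanSpace ℝ (Fin d),
      HasFDerivAt (fun z : Fin M → EuclideanSpace ℝ (Fin d) => f (z I) (emp z))
        ((innerSL ℝ (Dx (y I) (emp y))).comp (ContinuousLinearMap.proj I)
          + (M : ℝ)⁻¹ • ∑ J, (innerSL ℝ (Dμ (y I) (emp y) (y J))).comp
              (ContinuousLinearMap.proj J)) y) :
    |f (x i) (emp x) - f (x' i) (emp x')
        - (inner ℝ (Dx (x' i) (emp x')) (x i - x' i) : ℝ)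
        - (N:ℝ)⁻¹ * ∑ j, (inner ℝ (Dμ (x' i) (emp x') (x' j)) (x j - x' j) : ℝ)|
      ≤ (L * 3^χ * (1+‖x i‖+‖x' i‖)^χ * ‖x i - x' i‖^2
          + L * (((N:ℝ)⁻¹ * ∑ j, ‖x j - x' j‖^2) + ‖x i - x' i‖^2)/2
          + 2*L*((N:ℝ)⁻¹ * ∑ j, ‖x j - x' j‖^2))
        + (L * (3^(ξ+1) * (1+‖x i‖+‖x' i‖)^(ξ+1) * ‖x i - x' i‖^2
            + ((N:ℝ)⁻¹ * ∑ j, ‖x j - x' j‖^2) + 2*‖x i - x' i‖^2)) * (M:ℝ)⁻¹ := by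
  classical
  have hMR : (0:ℝ) < (M:ℝ) := by exact_mod_cast hM
  have hMinv : (0:ℝ) ≤ (M:ℝ)⁻¹ := by positivity
  set A : ℝ := 1 + ‖x i‖ + ‖x' i‖ with hA
  have hA0 : (0:ℝ) ≤ A := by
    have h1 := norm_nonneg (x i); have h2 := norm_nonneg (x' i); rw [hA]; linarith
  set hh : ℝ := ‖x i - x' i‖ with hhdef
  have hh0 : 0 ≤ hh := norm_nonneg _
  set S : ℝ := (N:ℝ)⁻¹ * ∑ j, ‖x j - x' j‖^2 with hS
  have hS0 : (0:ℝ) ≤ S := by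
    rw [hS]
    exact mul_nonneg (inv_nonneg.2 (Nat.cast_nonneg N))
      (Finset.sum_nonneg fun j _ => sq_nonneg _)
  have hSsqrt : Real.sqrt S * Real.sqrt S = S := Real.mul_self_sqrt hS0
  set Y0 : Fin M → EuclideanSpace ℝ (Fin d) := fun J => x' (q J) with hY0
  set v1 : Fin M → EuclideanSpace ℝ (Fin d) :=
    fun J => if J = I then 0 else x (q J) - x' (q J) with hv1
  set v2 : Fin M → EuclideanSpace ℝ (Fin d) :=
    fun J => if J = I then x i - x' i else 0 with hv2
  have hv1I : v1 I = 0 := by simp [hv1]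
  have hv2I : v2 I = x i - x' i := by simp [hv2]
  have hY0I : Y0 I = x' i := by simp [hY0, hqI]
  have hsum12 : ∀ J, v1 J + v2 J = x (q J) - x' (q J) := by
    intro J
    by_cases h : J = I
    · subst h; simp [hv1, hv2, hqI]
    · simp [hv1, hv2, h]
  have hnv1 : ∀ J, ‖v1 J‖ ≤ ‖x (q J) - x' (q J)‖ := by
    intro J
    by_cases h : J = I
    · subst h; simp [hv1]
    · simp [hv1, h]
  have hrepS : (M:ℝ)⁻¹ * ∑ J, ‖x (q J) - x' (q J)‖^2 = S := by
    rw [hS]; exact hrep (fun j => ‖x j - x' j‖^2)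
  -- W2 bound along paths
  have hW2 : ∀ Z : Fin M → EuclideanSpace ℝ (Fin d),
      (∀ J, ‖Z J - Y0 J‖ ≤ ‖x (q J) - x' (q J)‖) →
      W2 (emp Z) (emp x') ≤ Real.sqrt S := by
    intro Z hZ
    have h1 := W2_emp_le hM Z Y0
    rw [show emp Y0 = emp x' from hempq x'] at h1
    refine h1.trans (Real.sqrt_le_sqrt ?_)
    rw [← hrepS]
    refine mul_le_mul_of_nonneg_left ?_ hMinv
    refine Finset.sum_le_sum fun J _ => ?_
    exact pow_le_pow_left₀ (norm_nonneg _) (hZ J) 2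
  have hmemM : ∀ Z : Fin M → EuclideanSpace ℝ (Fin d), MemP2 (emp Z) :=
    fun Z => memP2_emp hM Z
  have hmemN : MemP2 (emp x') := memP2_emp hN x'
  -- derivative along affine paths
  have hderiv : ∀ (Y v : Fin M → EuclideanSpace ℝ (Fin d)) (t : ℝ),
      HasDerivAt (fun s : ℝ => f ((Y + s • v) I) (emp (Y + s • v)))
        ((inner ℝ (Dx ((Y + t • v) I) (emp (Y + t • v))) (v I) : ℝ)
          + (M:ℝ)⁻¹ * ∑ J,
            (inner ℝ (Dμ ((Y + t • v) I) (emp (Y + t • v)) ((Y + t • v) J)) (v J) : ℝ)) t := by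
    intro Y v t
    have hpath : HasDerivAt (fun s : ℝ => Y + s • v) v t := by
      simpa using ((hasDerivAt_id t).smul_const v).const_add Y
    have hcomp := (hLM (Y + t • v)).comp_hasDerivAt t hpath
    convert hcomp using 1
    · rfl
    · rfl
    · rfl
    simp [ContinuousLinearMap.add_apply, ContinuousLinearMap.smul_apply,
      ContinuousLinearMap.sum_apply, ContinuousLinearMap.proj_apply,
      ContinuousLinearMap.comp_apply, smul_eq_mul, Finset.mul_sum]
  -- phase 1
  set c1 : ℝ := (M:ℝ)⁻¹ * ∑ J, (inner ℝ (Dμ (x' i) (emp x') (x' (q J))) (v1 J) : ℝ) with hc1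
  have phase1 : |f ((Y0 + v1) I) (emp (Y0 + v1)) - f (x' i) (emp x') - c1| ≤ 2 * L * S := by
    have hb : ∀ t ∈ Icc (0:ℝ) 1,
        |((inner ℝ (Dx ((Y0 + t • v1) I) (emp (Y0 + t • v1))) (v1 I) : ℝ)
          + (M:ℝ)⁻¹ * ∑ J, (inner ℝ (Dμ ((Y0 + t • v1) I) (emp (Y0 + t • v1))
              ((Y0 + t • v1) J)) (v1 J) : ℝ)) - c1| ≤ 2 * L * S := by
      intro t ht
      obtain ⟨ht0, ht1⟩ := ht
      have hPI : (Y0 + t • v1) I = x' i := by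
        simp [hY0I, hv1I]
      have hdist : ∀ J, ‖(Y0 + t • v1) J - Y0 J‖ ≤ ‖v1 J‖ := by
        intro J
        simp only [Pi.add_apply, Pi.smul_apply, add_sub_cancel_left, norm_smul,
          Real.norm_eq_abs, abs_of_nonneg ht0]
        exact mul_le_of_le_one_left (norm_nonneg _) ht1
      have hW : W2 (emp (Y0 + t • v1)) (emp x') ≤ Real.sqrt S :=
        hW2 _ (fun J => (hdist J).trans (hnv1 J))
      have hDJ : ∀ J, ‖Dμ (x' i) (emp (Y0 + t • v1)) ((Y0 + t • v1) J)
          - Dμ (x' i) (emp x') (x' (q J))‖ ≤ L * (Real.sqrt S + ‖v1 J‖) := by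
        intro J
        have h := hDμ ((Y0 + t • v1) I) (x' i) ((Y0 + t • v1) J) (x' (q J))
          (emp (Y0 + t • v1)) (emp x') (hmemM _) hmemN
        rw [hPI] at h
        simp only [sub_self, norm_zero, mul_zero, zero_add] at h
        refine h.trans ?_
        have h2 : ‖(Y0 + t • v1) J - x' (q J)‖ ≤ ‖v1 J‖ := hdist J
        have := mul_le_mul_of_nonneg_left (add_le_add hW h2) hL.le
        linarith [this]
      -- sum the bounds
      rw [hPI, hv1I, inner_zero_right, zero_add, hc1, ← mul_sub, ← Finset.sum_sub_distrib]
      rw [abs_mul, abs_of_nonneg hMinv]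
      have hstep : |∑ J, ((inner ℝ (Dμ (x' i) (emp (Y0 + t • v1)) ((Y0 + t • v1) J)) (v1 J) : ℝ)
          - (inner ℝ (Dμ (x' i) (emp x') (x' (q J))) (v1 J) : ℝ))|
          ≤ ∑ J, L * (Real.sqrt S + ‖v1 J‖) * ‖v1 J‖ := by
        refine (Finset.abs_sum_le_sum_abs _ _).trans (Finset.sum_le_sum fun J _ => ?_)
        rw [← inner_sub_left]
        refine (abs_real_inner_le_norm _ _).trans ?_
        exact mul_le_mul_of_nonneg_right (hDJ J) (norm_nonneg _)
      refine (mul_le_mul_of_nonneg_left hstep hMinv).trans ?_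
      -- (M)⁻¹ ∑ L(√S + a_J) a_J ≤ 2 L S
      have hs2 : (M:ℝ)⁻¹ * ∑ J, ‖v1 J‖^2 ≤ S := by
        rw [← hrepS]
        refine mul_le_mul_of_nonneg_left (Finset.sum_le_sum fun J _ => ?_) hMinv
        exact pow_le_pow_left₀ (norm_nonneg _) (hnv1 J) 2
      have hs1 : (M:ℝ)⁻¹ * ∑ J, ‖v1 J‖ ≤ Real.sqrt S := by
        have h0 : (0:ℝ) ≤ (M:ℝ)⁻¹ * ∑ J, ‖v1 J‖ :=
          mul_nonneg hMinv (Finset.sum_nonneg fun J _ => norm_nonneg _)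
        have hsq : ((M:ℝ)⁻¹ * ∑ J, ‖v1 J‖)^2 ≤ S := by
          have hcs : (∑ J, ‖v1 J‖)^2 ≤ (M:ℝ) * ∑ J, ‖v1 J‖^2 := by
            have := sq_sum_le_card_mul_sum_sq (s := (Finset.univ : Finset (Fin M)))
              (f := fun J => ‖v1 J‖)
            simpa using this
          calc ((M:ℝ)⁻¹ * ∑ J, ‖v1 J‖)^2 = ((M:ℝ)⁻¹)^2 * (∑ J, ‖v1 J‖)^2 := by ring
            _ ≤ ((M:ℝ)⁻¹)^2 * ((M:ℝ) * ∑ J, ‖v1 J‖^2) := by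
                exact mul_le_mul_of_nonneg_left hcs (by positivity)
            _ = (M:ℝ)⁻¹ * ((M:ℝ)⁻¹ * (M:ℝ)) * ∑ J, ‖v1 J‖^2 := by ring
            _ = (M:ℝ)⁻¹ * ∑ J, ‖v1 J‖^2 := by
                rw [inv_mul_cancel₀ hMR.ne', mul_one]
            _ ≤ S := hs2
        calc (M:ℝ)⁻¹ * ∑ J, ‖v1 J‖ = Real.sqrt (((M:ℝ)⁻¹ * ∑ J, ‖v1 J‖)^2) :=
              (Real.sqrt_sq h0).symm
          _ ≤ Real.sqrt S := Real.sqrt_le_sqrt hsq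
      have hexp : ∑ J, L * (Real.sqrt S + ‖v1 J‖) * ‖v1 J‖
          = L * Real.sqrt S * (∑ J, ‖v1 J‖) + L * (∑ J, ‖v1 J‖^2) := by
        rw [Finset.mul_sum, Finset.mul_sum, ← Finset.sum_add_distrib]
        exact Finset.sum_congr rfl fun J _ => by ring
      calc (M:ℝ)⁻¹ * ∑ J, L * (Real.sqrt S + ‖v1 J‖) * ‖v1 J‖
          = L * (Real.sqrt S * ((M:ℝ)⁻¹ * ∑ J, ‖v1 J‖)
              + (M:ℝ)⁻¹ * ∑ J, ‖v1 J‖^2) := by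
            rw [hexp]; ring
        _ ≤ L * (Real.sqrt S * Real.sqrt S + S) := by
            refine mul_le_mul_of_nonneg_left ?_ hL.le
            have := mul_le_mul_of_nonneg_left hs1 (Real.sqrt_nonneg S)
            linarith
        _ = 2 * L * S := by rw [hSsqrt]; ring
    have htay := taylor_aux (φ := fun t => f ((Y0 + t • v1) I) (emp (Y0 + t • v1)))
      (ψ := fun t => (inner ℝ (Dx ((Y0 + t • v1) I) (emp (Y0 + t • v1))) (v1 I) : ℝ)
          + (M:ℝ)⁻¹ * ∑ J, (inner ℝ (Dμ ((Y0 + t • v1) I) (emp (Y0 + t • v1))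
              ((Y0 + t • v1) J)) (v1 J) : ℝ))
      (c := c1) (B := 2 * L * S)
      (fun t _ => hderiv Y0 v1 t) hb
    simp only [one_smul, zero_smul, add_zero] at htay
    rw [show emp Y0 = emp x' from hempq x', hY0I] at htay
    exact htay
  -- phase 2
  set c2 : ℝ := (inner ℝ (Dx (x' i) (emp x')) (x i - x' i) : ℝ)
      + (M:ℝ)⁻¹ * ∑ J, (inner ℝ (Dμ (x' i) (emp x') (x' (q J))) (v2 J) : ℝ) with hc2
  set B2 : ℝ := L * (3^χ * A^χ * hh + Real.sqrt S) * hh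
      + (M:ℝ)⁻¹ * (L * (3^(ξ+1) * A^(ξ+1) * hh + Real.sqrt S + hh) * hh) with hB2
  have hend : Y0 + v1 + v2 = fun J => x (q J) := by
    funext J
    by_cases h : J = I
    · subst h
      simp only [Pi.add_apply, hY0I, hv1I, hv2I, add_zero, hqI]
      abel
    · simp only [Pi.add_apply, hv1, hv2, if_neg h]
      simp [hY0]
  have hW1I : (Y0 + v1) I = x' i := by simp [hY0I, hv1I]
  have phase2 : |f (x i) (emp x) - f ((Y0 + v1) I) (emp (Y0 + v1)) - c2| ≤ B2 := by
    have hb : ∀ s ∈ Icc (0:ℝ) 1,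
        |((inner ℝ (Dx ((Y0 + v1 + s • v2) I) (emp (Y0 + v1 + s • v2))) (v2 I) : ℝ)
          + (M:ℝ)⁻¹ * ∑ J, (inner ℝ (Dμ ((Y0 + v1 + s • v2) I) (emp (Y0 + v1 + s • v2))
              ((Y0 + v1 + s • v2) J)) (v2 J) : ℝ)) - c2| ≤ B2 := by
      intro s hs
      obtain ⟨hs0, hs1⟩ := hs
      set u : EuclideanSpace ℝ (Fin d) := x' i + s • (x i - x' i) with hu
      have hPI2 : (Y0 + v1 + s • v2) I = u := by
        simp [hY0I, hv1I, hv2I, hu]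
      have hus : ‖u - x' i‖ ≤ hh := by
        rw [hu]
        simp only [add_sub_cancel_left, norm_smul, Real.norm_eq_abs, abs_of_nonneg hs0]
        exact mul_le_of_le_one_left hh0 hs1
      have husn : ‖u‖ ≤ ‖x' i‖ + hh := by
        have := norm_add_le (x' i) (s • (x i - x' i))
        rw [hu]
        refine this.trans ?_
        simp only [norm_smul, Real.norm_eq_abs, abs_of_nonneg hs0]
        exact add_le_add le_rfl (mul_le_of_le_one_left hh0 hs1)
      have hhle : hh ≤ ‖x i‖ + ‖x' i‖ := norm_sub_le _ _
      have h3A : 1 + ‖u‖ + ‖x' i‖ ≤ 3*A := by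
        rw [hA]
        have := norm_nonneg (x i); have := norm_nonneg (x' i)
        linarith
      have hrp : ∀ e : ℝ, 0 ≤ e → (1 + ‖u‖ + ‖x' i‖)^e ≤ 3^e * A^e := by
        intro e he
        calc (1 + ‖u‖ + ‖x' i‖)^e ≤ (3*A)^e := by
              refine Real.rpow_le_rpow ?_ h3A he
              positivity
          _ = 3^e * A^e := Real.mul_rpow (by norm_num) hA0
      have hdist : ∀ J, ‖(Y0 + v1 + s • v2) J - Y0 J‖ ≤ ‖x (q J) - x' (q J)‖ := by
        intro J
        by_cases h : J = I
        · rw [h, hqI]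
          have e : (Y0 + v1 + s • v2) I - Y0 I = s • (x i - x' i) := by
            simp only [Pi.add_apply, Pi.smul_apply, hv1I, hv2I, add_zero, smul_zero]
            abel
          rw [e]
          simp only [norm_smul, Real.norm_eq_abs, abs_of_nonneg hs0]
          exact mul_le_of_le_one_left (norm_nonneg _) hs1
        · have e : (Y0 + v1 + s • v2) J - Y0 J = x (q J) - x' (q J) := by
            simp only [Pi.add_apply, Pi.smul_apply, hv1, hv2, if_neg h, smul_zero, add_zero]
            abel
          rw [e]
      have hW : W2 (emp (Y0 + v1 + s • v2)) (emp x') ≤ Real.sqrt S := hW2 _ hdist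
      -- Dx difference
      have hDxd : ‖Dx u (emp (Y0 + v1 + s • v2)) - Dx (x' i) (emp x')‖
          ≤ L * (3^χ * A^χ * hh + Real.sqrt S) := by
        refine (hDx u (x' i) _ _ (hmemM _) hmemN).trans ?_
        refine mul_le_mul_of_nonneg_left (add_le_add ?_ hW) hL.le
        calc (1 + ‖u‖ + ‖x' i‖)^χ * ‖u - x' i‖ ≤ (3^χ * A^χ) * hh := by
              refine mul_le_mul (hrp χ hχ) hus (norm_nonneg _) ?_
              positivity
          _ = 3^χ * A^χ * hh := by ring
      -- Dμ difference at I
      have hDμd : ‖Dμ u (emp (Y0 + v1 + s • v2)) u - Dμ (x' i) (emp x') (x' i)‖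
          ≤ L * (3^(ξ+1) * A^(ξ+1) * hh + Real.sqrt S + hh) := by
        refine (hDμ u (x' i) u (x' i) _ _ (hmemM _) hmemN).trans ?_
        refine mul_le_mul_of_nonneg_left (add_le_add (add_le_add ?_ hW) hus) hL.le
        calc (1 + ‖u‖ + ‖x' i‖)^(ξ+1) * ‖u - x' i‖ ≤ (3^(ξ+1) * A^(ξ+1)) * hh := by
              refine mul_le_mul (hrp (ξ+1) (by linarith)) hus (norm_nonneg _) ?_
              positivity
          _ = 3^(ξ+1) * A^(ξ+1) * hh := by ring
      -- collapse the sum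
      have hcollapse : ∑ J, ((inner ℝ (Dμ u (emp (Y0 + v1 + s • v2))
            ((Y0 + v1 + s • v2) J)) (v2 J) : ℝ)
            - (inner ℝ (Dμ (x' i) (emp x') (x' (q J))) (v2 J) : ℝ))
          = (inner ℝ (Dμ u (emp (Y0 + v1 + s • v2)) u - Dμ (x' i) (emp x') (x' i))
              (x i - x' i) : ℝ) := by
        rw [Finset.sum_eq_single_of_mem I (Finset.mem_univ I)]
        · rw [hPI2, hv2I, hqI, ← inner_sub_left]
        · intro J _ hJ
          simp [hv2, if_neg hJ]
      rw [hPI2, hv2I, hc2]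
      have hre : ((inner ℝ (Dx u (emp (Y0 + v1 + s • v2))) (x i - x' i) : ℝ)
            + (M:ℝ)⁻¹ * ∑ J, (inner ℝ (Dμ u (emp (Y0 + v1 + s • v2))
                ((Y0 + v1 + s • v2) J)) (v2 J) : ℝ))
          - ((inner ℝ (Dx (x' i) (emp x')) (x i - x' i) : ℝ)
            + (M:ℝ)⁻¹ * ∑ J, (inner ℝ (Dμ (x' i) (emp x') (x' (q J))) (v2 J) : ℝ))
          = (inner ℝ (Dx u (emp (Y0 + v1 + s • v2)) - Dx (x' i) (emp x')) (x i - x' i) : ℝ)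
            + (M:ℝ)⁻¹ * (inner ℝ (Dμ u (emp (Y0 + v1 + s • v2)) u
                - Dμ (x' i) (emp x') (x' i)) (x i - x' i) : ℝ) := by
        rw [← hcollapse, inner_sub_left, Finset.sum_sub_distrib]
        ring
      rw [hre]
      refine (abs_add_le _ _).trans ?_
      rw [hB2]
      have e1 : |(inner ℝ (Dx u (emp (Y0 + v1 + s • v2)) - Dx (x' i) (emp x'))
          (x i - x' i) : ℝ)| ≤ L * (3^χ * A^χ * hh + Real.sqrt S) * hh := by
        refine (abs_real_inner_le_norm _ _).trans ?_
        exact mul_le_mul_of_nonneg_right hDxd hh0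
      have e2 : |(M:ℝ)⁻¹ * (inner ℝ (Dμ u (emp (Y0 + v1 + s • v2)) u
          - Dμ (x' i) (emp x') (x' i)) (x i - x' i) : ℝ)|
          ≤ (M:ℝ)⁻¹ * (L * (3^(ξ+1) * A^(ξ+1) * hh + Real.sqrt S + hh) * hh) := by
        rw [abs_mul, abs_of_nonneg hMinv]
        refine mul_le_mul_of_nonneg_left ?_ hMinv
        refine (abs_real_inner_le_norm _ _).trans ?_
        exact mul_le_mul_of_nonneg_right hDμd hh0
      linarith
    have htay := taylor_aux
      (φ := fun s => f (((Y0 + v1) + s • v2) I) (emp ((Y0 + v1) + s • v2)))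
      (ψ := fun s => (inner ℝ (Dx (((Y0 + v1) + s • v2) I) (emp ((Y0 + v1) + s • v2))) (v2 I) : ℝ)
          + (M:ℝ)⁻¹ * ∑ J, (inner ℝ (Dμ (((Y0 + v1) + s • v2) I) (emp ((Y0 + v1) + s • v2))
              (((Y0 + v1) + s • v2) J)) (v2 J) : ℝ))
      (c := c2) (B := B2)
      (fun s _ => hderiv (Y0 + v1) v2 s) hb
    simp only [one_smul, zero_smul, add_zero] at htay
    rw [hend] at htay
    rw [show (fun J => x (q J)) I = x i from congrArg x hqI, hempq x] at htay
    exact htay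
  -- combine the linearizations
  have h12 : (∑ J, (inner ℝ (Dμ (x' i) (emp x') (x' (q J))) (v1 J) : ℝ))
      + (∑ J, (inner ℝ (Dμ (x' i) (emp x') (x' (q J))) (v2 J) : ℝ))
      = ∑ J, (inner ℝ (Dμ (x' i) (emp x') (x' (q J))) (x (q J) - x' (q J)) : ℝ) := by
    rw [← Finset.sum_add_distrib]
    exact Finset.sum_congr rfl fun J _ => by rw [← inner_add_right, hsum12 J]
  have hcc : c1 + c2 = (inner ℝ (Dx (x' i) (emp x')) (x i - x' i) : ℝ)
      + (N:ℝ)⁻¹ * ∑ j, (inner ℝ (Dμ (x' i) (emp x') (x' j)) (x j - x' j) : ℝ) := by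
    rw [hc1, hc2]
    have hgrep := hrep (fun j => (inner ℝ (Dμ (x' i) (emp x') (x' j)) (x j - x' j) : ℝ))
    calc (M:ℝ)⁻¹ * ∑ J, (inner ℝ (Dμ (x' i) (emp x') (x' (q J))) (v1 J) : ℝ)
        + ((inner ℝ (Dx (x' i) (emp x')) (x i - x' i) : ℝ)
          + (M:ℝ)⁻¹ * ∑ J, (inner ℝ (Dμ (x' i) (emp x') (x' (q J))) (v2 J) : ℝ))
        = (inner ℝ (Dx (x' i) (emp x')) (x i - x' i) : ℝ)
          + (M:ℝ)⁻¹ * ((∑ J, (inner ℝ (Dμ (x' i) (emp x') (x' (q J))) (v1 J) : ℝ))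
            + (∑ J, (inner ℝ (Dμ (x' i) (emp x') (x' (q J))) (v2 J) : ℝ))) := by ring
      _ = (inner ℝ (Dx (x' i) (emp x')) (x i - x' i) : ℝ)
          + (N:ℝ)⁻¹ * ∑ j, (inner ℝ (Dμ (x' i) (emp x') (x' j)) (x j - x' j) : ℝ) := by
          rw [h12, hgrep]
  have split : f (x i) (emp x) - f (x' i) (emp x')
      - (inner ℝ (Dx (x' i) (emp x')) (x i - x' i) : ℝ)
      - (N:ℝ)⁻¹ * ∑ j, (inner ℝ (Dμ (x' i) (emp x') (x' j)) (x j - x' j) : ℝ)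
      = (f ((Y0 + v1) I) (emp (Y0 + v1)) - f (x' i) (emp x') - c1)
        + (f (x i) (emp x) - f ((Y0 + v1) I) (emp (Y0 + v1)) - c2) := by
    linear_combination hcc
  have hsqhh : Real.sqrt S * hh ≤ (S + hh^2)/2 := by
    nlinarith [sq_nonneg (Real.sqrt S - hh), hSsqrt]
  have hB2a : L * (3^χ * A^χ * hh + Real.sqrt S) * hh
      ≤ L * 3^χ * A^χ * hh^2 + L * ((S + hh^2)/2) := by
    have h1 : L * (Real.sqrt S * hh) ≤ L * ((S + hh^2)/2) :=
      mul_le_mul_of_nonneg_left hsqhh hL.le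
    nlinarith []
  have hB2b : L * (3^(ξ+1) * A^(ξ+1) * hh + Real.sqrt S + hh) * hh
      ≤ L * (3^(ξ+1) * A^(ξ+1) * hh^2 + S + 2*hh^2) := by
    have inner_le : (3^(ξ+1) * A^(ξ+1) * hh + Real.sqrt S + hh) * hh
        ≤ 3^(ξ+1) * A^(ξ+1) * hh^2 + S + 2*hh^2 := by
      nlinarith [hsqhh, hS0, sq_nonneg hh]
    calc L * (3^(ξ+1) * A^(ξ+1) * hh + Real.sqrt S + hh) * hh
        = L * ((3^(ξ+1) * A^(ξ+1) * hh + Real.sqrt S + hh) * hh) := by ring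
      _ ≤ L * (3^(ξ+1) * A^(ξ+1) * hh^2 + S + 2*hh^2) :=
          mul_le_mul_of_nonneg_left inner_le hL.le
  have hB2c : (M:ℝ)⁻¹ * (L * (3^(ξ+1) * A^(ξ+1) * hh + Real.sqrt S + hh) * hh)
      ≤ (L * (3^(ξ+1) * A^(ξ+1) * hh^2 + S + 2*hh^2)) * (M:ℝ)⁻¹ := by
    rw [mul_comm ((M:ℝ)⁻¹)]
    exact mul_le_mul_of_nonneg_right hB2b hMinv
  calc |f (x i) (emp x) - f (x' i) (emp x')
      - (inner ℝ (Dx (x' i) (emp x')) (x i - x' i) : ℝ)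
      - (N:ℝ)⁻¹ * ∑ j, (inner ℝ (Dμ (x' i) (emp x') (x' j)) (x j - x' j) : ℝ)|
      = |(f ((Y0 + v1) I) (emp (Y0 + v1)) - f (x' i) (emp x') - c1)
        + (f (x i) (emp x) - f ((Y0 + v1) I) (emp (Y0 + v1)) - c2)| := by rw [split]
    _ ≤ |f ((Y0 + v1) I) (emp (Y0 + v1)) - f (x' i) (emp x') - c1|
        + |f (x i) (emp x) - f ((Y0 + v1) I) (emp (Y0 + v1)) - c2| := abs_add_le _ _
    _ ≤ 2 * L * S + B2 := add_le_add phase1 phase2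
    _ ≤ (L * 3^χ * A^χ * hh^2 + L * (S + hh^2)/2 + 2*L*S)
        + (L * (3^(ξ+1) * A^(ξ+1) * hh^2 + S + 2*hh^2)) * (M:ℝ)⁻¹ := by
        rw [hB2]
        linarith [hB2a, hB2c]




set_option maxHeartbeats 1000000 in
/-- Taylor-type remainder estimate for functions of empirical measures (Lemma 7 of
Kumar–Neelima 2020).  Here `Dx f` is the gradient of `f` in the state variable and
`Dμ f` its Lions derivative; the Lions-derivative property is encoded through the
differentiability of the empirical projections `x ↦ f(x^i, (1/N)∑δ_{x^j})`, whose
gradient is given by `Dx` and `Dμ` in the standard way. -/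
theorem empirical_taylor_remainder {d : ℕ} (L χ ξ : ℝ)
    (hL : 0 < L) (hχ : 0 ≤ χ) (hξ : 0 ≤ ξ)
    (f : EuclideanSpace ℝ (Fin d) → Measure (EuclideanSpace ℝ (Fin d)) → ℝ)
    (Dx : EuclideanSpace ℝ (Fin d) → Measure (EuclideanSpace ℝ (Fin d)) →
      EuclideanSpace ℝ (Fin d))
    (Dμ : EuclideanSpace ℝ (Fin d) → Measure (EuclideanSpace ℝ (Fin d)) →
      EuclideanSpace ℝ (Fin d) → EuclideanSpace ℝ (Fin d))
    (hDx : ∀ (x x' : EuclideanSpace ℝ (Fin d))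
      (μ μ' : Measure (EuclideanSpace ℝ (Fin d))), MemP2 μ → MemP2 μ' →
      ‖Dx x μ - Dx x' μ'‖ ≤ L * ((1 + ‖x‖ + ‖x'‖) ^ χ * ‖x - x'‖ + W2 μ μ'))
    (hDμ : ∀ (x x' y y' : EuclideanSpace ℝ (Fin d))
      (μ μ' : Measure (EuclideanSpace ℝ (Fin d))), MemP2 μ → MemP2 μ' →
      ‖Dμ x μ y - Dμ x' μ' y'‖
        ≤ L * ((1 + ‖x‖ + ‖x'‖) ^ (ξ + 1) * ‖x - x'‖ + W2 μ μ' + ‖y - y'‖))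
    (hLions : ∀ (N : ℕ), 0 < N → ∀ (x : Fin N → EuclideanSpace ℝ (Fin d)) (i : Fin N),
      HasFDerivAt (fun y : Fin N → EuclideanSpace ℝ (Fin d) => f (y i) (emp y))
        ((innerSL ℝ (Dx (x i) (emp x))).comp (ContinuousLinearMap.proj i)
          + (N : ℝ)⁻¹ • ∑ j,
              (innerSL ℝ (Dμ (x i) (emp x) (x j))).comp (ContinuousLinearMap.proj j)) x) :
    ∃ K > (0 : ℝ), ∀ (N : ℕ), 0 < N →
      ∀ (x x' : Fin N → EuclideanSpace ℝ (Fin d)) (i : Fin N),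
      |f (x i) (emp x) - f (x' i) (emp x')
          - (inner ℝ (Dx (x' i) (emp x')) (x i - x' i) : ℝ)
          - (N : ℝ)⁻¹ * ∑ j, (inner ℝ (Dμ (x' i) (emp x') (x' j)) (x j - x' j) : ℝ)|
        ≤ K * (1 + ‖x i‖ + ‖x' i‖) ^ χ * ‖x i - x' i‖ ^ 2
          + K * (N : ℝ)⁻¹ * ∑ j, ‖x j - x' j‖ ^ 2 := by
  classical
  refine ⟨L * ((3:ℝ) ^ χ + 3), by positivity, ?_⟩
  intro N hN x x' i
  set A : ℝ := 1 + ‖x i‖ + ‖x' i‖ with hAdef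
  have hA1 : (1:ℝ) ≤ A := by
    have h1 := norm_nonneg (x i); have h2 := norm_nonneg (x' i)
    rw [hAdef]; linarith
  have hA0 : (0:ℝ) ≤ A := by linarith
  set S : ℝ := (N:ℝ)⁻¹ * ∑ j, ‖x j - x' j‖ ^ 2 with hSdef
  have hS0 : (0:ℝ) ≤ S := by positivity
  set hi : ℝ := ‖x i - x' i‖ with hidef
  have hi0 : 0 ≤ hi := norm_nonneg _
  set R : ℝ := f (x i) (emp x) - f (x' i) (emp x')
      - (inner ℝ (Dx (x' i) (emp x')) (x i - x' i) : ℝ)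
      - (N:ℝ)⁻¹ * ∑ j, (inner ℝ (Dμ (x' i) (emp x') (x' j)) (x j - x' j) : ℝ) with hRdef
  set C1 : ℝ := L * 3^χ * A^χ * hi^2 + L * (S + hi^2)/2 + 2*L*S with hC1def
  set C2 : ℝ := L * (3^(ξ+1) * A^(ξ+1) * hi^2 + S + 2*hi^2) with hC2def
  have h3ξ : (0:ℝ) ≤ (3:ℝ)^(ξ+1) := Real.rpow_nonneg (by norm_num) _
  have hAξ : (0:ℝ) ≤ A^(ξ+1) := Real.rpow_nonneg hA0 _
  have hC2 : 0 ≤ C2 := by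
    rw [hC2def]
    have := mul_nonneg (mul_nonneg h3ξ hAξ) (sq_nonneg hi)
    nlinarith [sq_nonneg hi]
  have key : ∀ m : ℕ, 0 < m → |R| ≤ C1 + C2 * (((N*m : ℕ) : ℝ))⁻¹ := by
    intro m hm
    have hM : 0 < N * m := Nat.mul_pos hN hm
    have hmne : (m:ℝ) ≠ 0 := by exact_mod_cast hm.ne'
    have hNne : (N:ℝ) ≠ 0 := by exact_mod_cast hN.ne'
    have hrep : ∀ g : Fin N → ℝ, (((N*m : ℕ)):ℝ)⁻¹ *
        ∑ J : Fin (N*m), g ((finProdFinEquiv.symm J).1) = (N:ℝ)⁻¹ * ∑ j, g j := by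
      intro g
      rw [rep_sum g, nsmul_eq_mul, Nat.cast_mul]
      field_simp
    have hempq : ∀ y : Fin N → EuclideanSpace ℝ (Fin d),
        emp (fun J : Fin (N*m) => y ((finProdFinEquiv.symm J).1)) = emp y := by
      intro y
      unfold emp
      rw [show (∑ J : Fin (N*m), Measure.dirac (y ((finProdFinEquiv.symm J).1)))
          = m • ∑ j, Measure.dirac (y j) from rep_sum (fun j => Measure.dirac (y j))]
      rw [← Nat.cast_smul_eq_nsmul ℝ≥0∞ m, smul_smul]
      congr 1
      have hm0 : (m : ℝ≥0∞) ≠ 0 := by exact_mod_cast hm.ne'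
      have hN0 : (N : ℝ≥0∞) ≠ 0 := by exact_mod_cast hN.ne'
      rw [Nat.cast_mul, ENNReal.mul_inv (Or.inl hN0) (Or.inl (ENNReal.natCast_ne_top N)),
        mul_assoc, ENNReal.inv_mul_cancel hm0 (ENNReal.natCast_ne_top m), mul_one]
    have happ := key_aux hL hχ hξ f Dx Dμ hDx hDμ hN hM x x' i
      (fun J => (finProdFinEquiv.symm J).1) (finProdFinEquiv (i, (⟨0, hm⟩ : Fin m)))
      (by simp) hrep hempq
      (fun y => hLions (N*m) hM y (finProdFinEquiv (i, (⟨0, hm⟩ : Fin m))))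
    rw [← hAdef, ← hidef, ← hSdef] at happ
    rw [← hC1def, ← hC2def, ← hRdef] at happ
    exact happ
  have hRC1 : |R| ≤ C1 := by
    refine le_of_forall_pos_le_add fun ε hε => ?_
    obtain ⟨m, hm⟩ := exists_nat_gt (max (C2 / ε) 0)
    have hmR : (0:ℝ) < m := lt_of_le_of_lt (le_max_right _ _) hm
    have hm0 : 0 < m := by exact_mod_cast hmR
    refine (key m hm0).trans ?_
    have hNm : (m:ℝ) ≤ ((N*m : ℕ) : ℝ) := by
      push_cast
      have h1 : (1:ℝ) ≤ (N:ℝ) := by exact_mod_cast hN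
      nlinarith
    have h1 : C2 / ε < m := lt_of_le_of_lt (le_max_left _ _) hm
    have h2 : C2 < ε * m := by
      rw [div_lt_iff₀ hε] at h1; linarith
    have h3 : C2 * (((N*m : ℕ) : ℝ))⁻¹ ≤ C2 * (m:ℝ)⁻¹ := by
      apply mul_le_mul_of_nonneg_left _ hC2
      exact inv_anti₀ hmR hNm
    have h4 : C2 * (m:ℝ)⁻¹ ≤ ε := by
      rw [mul_inv_le_iff₀' hmR]; nlinarith
    linarith
  -- final comparison
  have h1leA : (1:ℝ) ≤ A^χ := Real.one_le_rpow hA1 hχ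
  have h3χ : (0:ℝ) < (3:ℝ)^χ := Real.rpow_pos_of_pos (by norm_num) _
  have hAχ0 : (0:ℝ) ≤ A^χ := by linarith
  have hhiA : hi^2 ≤ A^χ * hi^2 := le_mul_of_one_le_left (sq_nonneg hi) h1leA
  have hfinal : C1 ≤ L*((3:ℝ)^χ+3)*A^χ*hi^2 + L*((3:ℝ)^χ+3)*S := by
    rw [hC1def]
    have p1 : L*hi^2 ≤ L*(A^χ*hi^2) := mul_le_mul_of_nonneg_left hhiA hL.le
    have p2 : 0 ≤ L*(A^χ*hi^2) := mul_nonneg hL.le (mul_nonneg hAχ0 (sq_nonneg hi))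
    have p3 : 0 ≤ L*S := mul_nonneg hL.le hS0
    have p4 : 0 ≤ (3:ℝ)^χ*(L*S) := mul_nonneg h3χ.le p3
    nlinarith [p1, p2, p3, p4]
  calc |R| ≤ C1 := hRC1
    _ ≤ L*((3:ℝ)^χ+3)*A^χ*hi^2 + L*((3:ℝ)^χ+3)*S := hfinal
    _ = L*((3:ℝ)^χ+3)*A^χ*hi^2 + L*((3:ℝ)^χ+3)*(N:ℝ)⁻¹*(∑ j, ‖x j - x' j‖^2) := by
        rw [hSdef]; ring
end
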